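/- For a positive rational a ∉ ℤ, the shortest 1-path from ⌈a⌉ to a is given by the sequence of successive convergents of the negative continued fraction expansion of a. -/

import Mathlib

/-- Value of the negative continued fraction `[a; l] = a − 1/(l₀ − 1/(l₁ − ⋯))`. -/
def ncfVal : ℤ → List ℤ → ℚ
  | a, [] => (a : ℚ)
  | a, b :: l => (a : ℚ) - 1 / ncfVal b l

/-- The `i`-th convergent `[a₀, a₁, …, aᵢ]` of the negative continued fraction
with partial quotients `a 0, a 1, a 2, …`. -/
def ncfConv (a : ℕ → ℤ) (i : ℕ) : ℚ := ncfVal (a 0) ((List.range' 1 i).map a)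

/-- An `N`-path is a strictly decreasing sequence of rationals (automatically
in lowest terms, as elements of `ℚ`) such that consecutive entries `x > y`
satisfy `x − y = N / (lcm(N, x.den) · lcm(N, y.den))`. -/
def IsNPath (N : ℕ) (l : List ℚ) : Prop :=
  l.Chain' fun x y => y < x ∧
    x - y = (N : ℚ) / ((Nat.lcm N x.den : ℚ) * (Nat.lcm N y.den : ℚ))

/-- An `N`-path from `a` to `a'`: an `N`-path whose first entry is `a` and
whose last entry is `a'`. -/
def IsNPathFrom (N : ℕ) (a a' : ℚ) (l : List ℚ) : Prop :=
  IsNPath N l ∧ l.head? = some a ∧ l.getLast? = some a'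

/-- A shortest `N`-path from `a` to `a'`: an `N`-path from `a` to `a'` such
that no proper subsequence (containing the endpoints) is an `N`-path from `a`
to `a'`. -/
def IsShortestNPath (N : ℕ) (a a' : ℚ) (l : List ℚ) : Prop :=
  IsNPathFrom N a a' l ∧
    ∀ l' : List ℚ, l'.Sublist l → l' ≠ l → ¬ IsNPathFrom N a a' l'

namespace Stmt14

/-- Product of matrices `[[b,-1],[1,0]]` over the list, as `(p, p', q, q')`. -/
def mat : List ℤ → ℤ × ℤ × ℤ × ℤ
  | [] => (1, 0, 0, 1)
  | b :: l => (b * (mat l).1 - (mat l).2.2.1, b * (mat l).2.1 - (mat l).2.2.2,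
      (mat l).1, (mat l).2.1)

lemma mat_det : ∀ l : List ℤ, (mat l).1 * (mat l).2.2.2 - (mat l).2.1 * (mat l).2.2.1 = 1
  | [] => by simp [mat]
  | b :: l => by simp only [mat]; linear_combination mat_det l

lemma mat_concat : ∀ (l : List ℤ) (b : ℤ), mat (l ++ [b]) =
    ((mat l).1 * b + (mat l).2.1, -(mat l).1, (mat l).2.2.1 * b + (mat l).2.2.2, -(mat l).2.2.1)
  | [], b => by simp [mat]
  | c :: l, b => by
    simp only [List.cons_append, List.append_eq, mat, mat_concat l b, Prod.mk.injEq]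
    exact ⟨by ring, by ring, trivial⟩

lemma mat_pos : ∀ l : List ℤ, (∀ x ∈ l, 2 ≤ x) → 0 ≤ (mat l).2.2.1 ∧ (mat l).2.2.1 < (mat l).1
  | [], _ => by simp [mat]
  | b :: l, h => by
    obtain ⟨h1, h2⟩ := mat_pos l (fun x hx => h x (List.mem_cons_of_mem _ hx))
    have hb : 2 ≤ b := h b List.mem_cons_self
    simp only [mat]
    constructor
    · linarith
    · nlinarith

lemma ncfVal_eq : ∀ (l : List ℤ), (∀ x ∈ l, 2 ≤ x) → ∀ b : ℤ,
    ncfVal b l = ((b * (mat l).1 - (mat l).2.2.1 : ℤ) : ℚ) / ((mat l).1 : ℤ)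
  | [], _, b => by simp [ncfVal, mat]
  | c :: l, h, b => by
    have hmem : ∀ x ∈ l, 2 ≤ x := fun x hx => h x (List.mem_cons_of_mem _ hx)
    have hc : 2 ≤ c := h c List.mem_cons_self
    obtain ⟨h1, h2⟩ := mat_pos l hmem
    have ih := ncfVal_eq l hmem c
    have hP : (0:ℚ) < ((mat l).1 : ℤ) := by exact_mod_cast lt_of_le_of_lt h1 h2
    have hnum : (0:ℚ) < ((c * (mat l).1 - (mat l).2.2.1 : ℤ) : ℚ) := by
      have : (0:ℤ) < c * (mat l).1 - (mat l).2.2.1 := by nlinarith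
      exact_mod_cast this
    have hval : ncfVal c l ≠ 0 := by rw [ih]; positivity
    show (b:ℚ) - 1 / ncfVal c l = _
    rw [ih]
    simp only [mat]
    push_cast at hnum hP ⊢
    have hne : ((mat l).1 : ℚ) * c - ((mat l).2.2.1 : ℚ) ≠ 0 := by nlinarith
    field_simp

section Conv

variable (a : ℕ → ℤ)

/-- matrix of `[a 0, …, a i]`. -/
def cm (i : ℕ) : ℤ × ℤ × ℤ × ℤ := mat ((List.range' 0 (i+1)).map a)

def pp (i : ℕ) : ℤ := (cm a i).1
def qq (i : ℕ) : ℤ := (cm a i).2.2.1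

lemma range'_map_concat (i : ℕ) :
    (List.range' 0 (i+1+1)).map a = (List.range' 0 (i+1)).map a ++ [a (i+1)] := by
  rw [List.range'_concat]
  simp

lemma cm_succ (i : ℕ) : cm a (i+1) =
    ((cm a i).1 * a (i+1) + (cm a i).2.1, -(cm a i).1,
     (cm a i).2.2.1 * a (i+1) + (cm a i).2.2.2, -(cm a i).2.2.1) := by
  rw [cm, range'_map_concat, mat_concat]; rfl

lemma cm_zero : cm a 0 = (a 0, -1, 1, 0) := by
  show mat ((List.range' 0 1).map a) = _
  simp [mat]

lemma det_succ (i : ℕ) : pp a i * qq a (i+1) - pp a (i+1) * qq a i = 1 := by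
  have h := mat_det ((List.range' 0 (i+1)).map a)
  rw [show mat ((List.range' 0 (i+1)).map a) = cm a i from rfl] at h
  simp only [pp, qq, cm_succ a i]
  linear_combination h

lemma pp_rec (i : ℕ) : pp a (i+1+1) = a (i+1+1) * pp a (i+1) - pp a i := by
  simp only [pp, cm_succ a (i+1), cm_succ a i]
  ring

lemma qq_rec (i : ℕ) : qq a (i+1+1) = a (i+1+1) * qq a (i+1) - qq a i := by
  simp only [qq, cm_succ a (i+1), cm_succ a i]
  ring

variable (n : ℕ) (ha : ∀ i, 1 ≤ i → i ≤ n → 2 ≤ a i)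

include ha in
lemma entries_ge {i : ℕ} (hi : i ≤ n) : ∀ x ∈ (List.range' 1 i).map a, 2 ≤ x := by
  intro x hx
  obtain ⟨j, hj, rfl⟩ := List.mem_map.mp hx
  rw [List.mem_range'_1] at hj
  exact ha j hj.1 (by omega)

lemma range'_zero_succ (i : ℕ) : (List.range' 0 (i+1)).map a = a 0 :: (List.range' 1 i).map a := by
  rw [List.range'_succ]
  simp

include ha in
lemma qq_pos {i : ℕ} (hi : i ≤ n) : 1 ≤ qq a i := by
  have h := mat_pos ((List.range' 1 i).map a) (entries_ge a n ha hi)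
  have : qq a i = (mat ((List.range' 1 i).map a)).1 := by
    simp only [qq, cm, range'_zero_succ, mat]
  omega

include ha in
lemma conv_eq {i : ℕ} (hi : i ≤ n) : ncfConv a i = (pp a i : ℚ) / (qq a i : ℚ) := by
  have h := ncfVal_eq ((List.range' 1 i).map a) (entries_ge a n ha hi) (a 0)
  have hp : pp a i = a 0 * (mat ((List.range' 1 i).map a)).1 - (mat ((List.range' 1 i).map a)).2.2.1 := by
    simp only [pp, cm, range'_zero_succ, mat]
  have hq : qq a i = (mat ((List.range' 1 i).map a)).1 := by
    simp only [qq, cm, range'_zero_succ, mat]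
  rw [ncfConv, h, hp, hq]

lemma coprime_pp_qq (i : ℕ) : Nat.Coprime (pp a i).natAbs (qq a i).natAbs := by
  have h := mat_det ((List.range' 0 (i+1)).map a)
  rw [show mat ((List.range' 0 (i+1)).map a) = cm a i from rfl] at h
  have hg : Int.gcd (pp a i) (qq a i) = 1 :=
    Int.isCoprime_iff_gcd_eq_one.mp ⟨(cm a i).2.2.2, -(cm a i).2.1, by
      simp only [pp, qq]; linear_combination h⟩
  exact hg

include ha in
lemma den_conv {i : ℕ} (hi : i ≤ n) : ((ncfConv a i).den : ℤ) = qq a i := by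
  rw [conv_eq a n ha hi]
  exact Rat.den_div_eq_of_coprime (by have := qq_pos a n ha hi; omega) (coprime_pp_qq a i)

end Conv

section Ineq

variable (a : ℕ → ℤ) (n : ℕ) (ha : ∀ i, 1 ≤ i → i ≤ n → 2 ≤ a i)

/-- Cross determinant `p_j q_k − p_k q_j`. -/
def Dd (j k : ℕ) : ℤ := pp a j * qq a k - pp a k * qq a j

lemma Dd_rec (j k : ℕ) : Dd a j (k+1+1) = a (k+1+1) * Dd a j (k+1) - Dd a j k := by
  simp only [Dd, pp_rec, qq_rec]; ring

lemma Dd_self (j : ℕ) : Dd a j j = 0 := by simp only [Dd]; ring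

lemma Dd_succ (j : ℕ) : Dd a j (j+1) = 1 := det_succ a j

include ha in
lemma Dd_ge (j : ℕ) : ∀ m : ℕ,
    (j + m ≤ n → (m : ℤ) ≤ Dd a j (j + m)) ∧
    (j + m + 1 ≤ n → Dd a j (j + m) + 1 ≤ Dd a j (j + m + 1)) := by
  intro m
  induction m with
  | zero =>
    refine ⟨fun _ => by simp [Dd_self], fun _ => by simp [Dd_self, Dd_succ]⟩
  | succ m ih =>
    constructor
    · intro h
      have h1 := ih.1 (by omega)
      have h2 := ih.2 (by omega)
      have : j + (m + 1) = j + m + 1 := by omega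
      rw [this]
      push_cast
      linarith
    · intro h
      have h1 := ih.1 (by omega)
      have h2 := ih.2 (by omega)
      have ha2 : 2 ≤ a (j + m + 1 + 1) := ha _ (by omega) (by omega)
      have hrec := Dd_rec a j (j + m)
      have hm0 : (0:ℤ) ≤ (m:ℤ) := by positivity
      have : j + (m + 1) = j + m + 1 := by omega
      rw [this, show j + m + 1 + 1 = j + m + 1 + 1 from rfl]
      nlinarith [h1, h2, ha2, hrec]

include ha in
lemma conv_sub {j k : ℕ} (hj : j ≤ n) (hk : k ≤ n) :
    ncfConv a j - ncfConv a k = (Dd a j k : ℚ) / ((qq a j : ℚ) * (qq a k : ℚ)) := by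
  have hqj : (0:ℚ) < (qq a j : ℚ) := by exact_mod_cast lt_of_lt_of_le zero_lt_one (qq_pos a n ha hj)
  have hqk : (0:ℚ) < (qq a k : ℚ) := by exact_mod_cast lt_of_lt_of_le zero_lt_one (qq_pos a n ha hk)
  rw [conv_eq a n ha hj, conv_eq a n ha hk, Dd]
  push_cast
  field_simp

include ha in
lemma conv_lt {j k : ℕ} (hjk : j < k) (hk : k ≤ n) : ncfConv a k < ncfConv a j := by
  obtain ⟨m, rfl⟩ : ∃ m, k = j + m := ⟨k - j, by omega⟩
  have hD := (Dd_ge a n ha j m).1 (by omega)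
  have hqj : (0:ℚ) < (qq a j : ℚ) := by
    exact_mod_cast lt_of_lt_of_le zero_lt_one (qq_pos a n ha (by omega))
  have hqk : (0:ℚ) < (qq a (j+m) : ℚ) := by
    exact_mod_cast lt_of_lt_of_le zero_lt_one (qq_pos a n ha hk)
  have hDpos : (0:ℚ) < (Dd a j (j+m) : ℚ) := by
    have : (1:ℤ) ≤ Dd a j (j+m) := le_trans (by exact_mod_cast Nat.one_le_iff_ne_zero.mpr (by omega)) hD
    exact_mod_cast lt_of_lt_of_le zero_lt_one this
  have := conv_sub a n ha (show j ≤ n by omega) hk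
  have hpos : 0 < ncfConv a j - ncfConv a (j+m) := by
    rw [this]; positivity
  linarith

include ha in
lemma key_step {j k : ℕ} (hj : j ≤ n) (hk : k ≤ n)
    (hlt : ncfConv a k < ncfConv a j)
    (heq : ncfConv a j - ncfConv a k = 1 / ((qq a j : ℚ) * (qq a k : ℚ))) :
    k = j + 1 := by
  have hjk : j < k := by
    rcases lt_trichotomy j k with h | h | h
    · exact h
    · subst h; exact absurd hlt (lt_irrefl _)
    · exact absurd (conv_lt a n ha h hj) (by linarith)
  have hqj : (0:ℚ) < (qq a j : ℚ) := by
    exact_mod_cast lt_of_lt_of_le zero_lt_one (qq_pos a n ha hj)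
  have hqk : (0:ℚ) < (qq a k : ℚ) := by
    exact_mod_cast lt_of_lt_of_le zero_lt_one (qq_pos a n ha hk)
  have hsub := conv_sub a n ha hj hk
  rw [hsub] at heq
  have hD1' : Dd a j k = 1 := by
    field_simp at heq
    exact_mod_cast heq
  by_contra hne
  have hk2 : j + 2 ≤ k := by omega
  obtain ⟨m, rfl⟩ : ∃ m, k = j + m := ⟨k - j, by omega⟩
  have hD := (Dd_ge a n ha j m).1 (by omega)
  have : (2:ℤ) ≤ (m:ℤ) := by exact_mod_cast (by omega : 2 ≤ m)
  omega

end Ineq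

lemma ncfVal_gt_one : ∀ (l : List ℤ), (∀ x ∈ l, 2 ≤ x) → ∀ b : ℤ, 2 ≤ b → 1 < ncfVal b l
  | [], _, b, hb => by
    show (1:ℚ) < (b:ℚ)
    exact_mod_cast lt_of_lt_of_le one_lt_two (by exact_mod_cast hb)
  | c :: l, h, b, hb => by
    have ht := ncfVal_gt_one l (fun x hx => h x (List.mem_cons_of_mem _ hx)) c
      (h c List.mem_cons_self)
    show (1:ℚ) < (b:ℚ) - 1 / ncfVal c l
    have h1 : 0 < 1 / ncfVal c l := by positivity
    have h2 : 1 / ncfVal c l < 1 := by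
      rw [div_lt_one (by linarith)]; linarith
    have hb' : (2:ℚ) ≤ (b:ℚ) := by exact_mod_cast hb
    linarith

lemma ceil_conv (a : ℕ → ℤ) (n : ℕ) (ha : ∀ i, 1 ≤ i → i ≤ n → 2 ≤ a i) (hn : 1 ≤ n) :
    ⌈ncfConv a n⌉ = a 0 := by
  obtain ⟨m, rfl⟩ : ∃ m, n = m + 1 := ⟨n - 1, by omega⟩
  rw [ncfConv, List.range'_succ, List.map_cons]
  have ht : 1 < ncfVal (a 1) ((List.range' 2 m).map a) := by
    refine ncfVal_gt_one _ ?_ _ (ha 1 le_rfl (by omega))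
    intro x hx
    obtain ⟨j, hj, rfl⟩ := List.mem_map.mp hx
    rw [List.mem_range'_1] at hj
    exact ha j (by omega) (by omega)
  show ⌈(a 0 : ℚ) - 1 / ncfVal (a 1) ((List.range' 2 m).map a)⌉ = a 0
  rw [Int.ceil_eq_iff]
  have h1 : 0 < 1 / ncfVal (a 1) ((List.range' 2 m).map a) := by positivity
  have h2 : 1 / ncfVal (a 1) ((List.range' 2 m).map a) < 1 := by
    rw [div_lt_one (by linarith)]; linarith
  constructor <;> push_cast <;> linarith

lemma chain'_mem {α : Type*} {P Q : α → α → Prop} :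
    ∀ (s : List α), s.Chain' P → (∀ x ∈ s, ∀ y ∈ s, P x y → Q x y) → s.Chain' Q
  | [], _, _ => List.isChain_nil
  | [x], _, _ => List.isChain_singleton x
  | x :: y :: t, h, hm => by
    simp only [List.Chain', List.isChain_cons_cons] at h ⊢
    exact ⟨hm x (by simp) y (by simp) h.1,
      chain'_mem (y :: t) h.2
        (fun u hu v hv => hm u (List.mem_cons_of_mem _ hu) v (List.mem_cons_of_mem _ hv))⟩

lemma chain_succ_range : ∀ (s : List ℕ), s.Chain' (fun j k => k = j + 1) →
    ∀ x, s.head? = some x → s = List.range' x s.length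
  | [], _, x, hx => by simp at hx
  | [j], _, x, hx => by
    simp only [List.head?_cons, Option.some.injEq] at hx
    subst hx
    simp [List.range']
  | j :: k :: t, h, x, hx => by
    simp only [List.head?_cons, Option.some.injEq] at hx
    subst hx
    simp only [List.Chain', List.isChain_cons_cons] at h
    have ih := chain_succ_range (k :: t) h.2 k rfl
    have hk : k = j + 1 := h.1
    subst hk
    show j :: (j+1) :: t = List.range' j (t.length + 1 + 1)
    rw [List.range'_succ]
    simp only [List.length_cons] at ih
    rw [← ih]

end Stmt14

open Stmt14 in
/-- For a positive rational `y ∉ ℤ` with negative continued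
fraction expansion `[a₀, …, aₙ]` (so `a₀ = ⌈y⌉`), the shortest `1`-path from
`⌈y⌉` to `y` is given by the sequence of successive convergents of the
negative continued fraction expansion of `y`. -/
theorem stmt14 (a : ℕ → ℤ) (n : ℕ) (ha : ∀ i, 1 ≤ i → i ≤ n → 2 ≤ a i)
    (y : ℚ) (hy : ncfConv a n = y) (hpos : 0 < y) (hnotint : y.den ≠ 1) :
    IsShortestNPath 1 ((⌈y⌉ : ℤ) : ℚ) y ((List.range (n + 1)).map (ncfConv a)) := by
  have hn : 1 ≤ n := by
    by_contra h
    have hn0 : n = 0 := by omega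
    subst hn0
    have : y = ((a 0 : ℤ) : ℚ) := by rw [← hy]; rfl
    rw [this] at hnotint
    exact hnotint (Rat.den_intCast _)
  have hconv0 : ncfConv a 0 = ((a 0 : ℤ) : ℚ) := rfl
  have hceil : ((⌈y⌉ : ℤ) : ℚ) = ncfConv a 0 := by
    rw [← hy, ceil_conv a n ha hn, hconv0]
  -- cast denominators
  have hdenQ : ∀ i, i ≤ n → ((ncfConv a i).den : ℚ) = (qq a i : ℚ) := by
    intro i hi
    exact_mod_cast congrArg (fun z : ℤ => (z : ℚ)) (den_conv a n ha hi)
  have hpathfrom : IsNPathFrom 1 ((⌈y⌉ : ℤ) : ℚ) y ((List.range (n + 1)).map (ncfConv a)) := by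
    refine ⟨?_, ?_, ?_⟩
    · simp only [IsNPath, List.Chain', List.isChain_map]
      refine (List.isChain_range_succ _ n).mpr ?_
      intro m hm
      have hm1 : m + 1 ≤ n := hm
      refine ⟨conv_lt a n ha (Nat.lt_succ_self m) hm1, ?_⟩
      rw [conv_sub a n ha (by omega) hm1, Dd_succ]
      simp only [Nat.lcm_one_left, Nat.cast_one]
      rw [hdenQ m (by omega), hdenQ (m+1) hm1]
      push_cast
      ring
    · rw [List.head?_map, List.head?_range]
      simp [hceil, hconv0]
    · rw [List.getLast?_map, List.range_succ, List.getLast?_concat]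
      simp [hy]
  refine ⟨hpathfrom, ?_⟩
  intro l' hsub hne hpath
  obtain ⟨s, hs, rfl⟩ := List.sublist_map_iff.mp hsub
  obtain ⟨hchain, hhead, hlast⟩ := hpath
  have hmem : ∀ x ∈ s, x ≤ n := by
    intro x hx
    have := hs.subset hx
    rw [List.mem_range] at this
    omega
  cases s with
  | nil => simp at hhead
  | cons j t =>
    have hmemj : j ≤ n := hmem j List.mem_cons_self
    have hhead' : ncfConv a j = ((⌈y⌉ : ℤ) : ℚ) := by
      rw [List.head?_map] at hhead
      simpa using hhead
    have hj0 : j = 0 := by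
      by_contra hj
      have : ncfConv a j < ncfConv a 0 := conv_lt a n ha (by omega) hmemj
      rw [hhead', hceil] at this
      exact absurd this (lt_irrefl _)
    subst hj0
    -- the chain of indices consists of successors
    have hchain' : (0 :: t).Chain' (fun u v => v = u + 1) := by
      simp only [IsNPath, List.Chain', List.isChain_map] at hchain
      refine chain'_mem _ hchain ?_
      intro x hx v hv hPQ
      have hxn : x ≤ n := hmem x hx
      have hvn : v ≤ n := hmem v hv
      refine key_step a n ha hxn hvn hPQ.1 ?_
      have := hPQ.2
      simp only [Nat.lcm_one_left, Nat.cast_one] at this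
      rw [hdenQ x hxn, hdenQ v hvn] at this
      exact this
    have hrange : (0 :: t) = List.range' 0 (t.length + 1) := by
      have := chain_succ_range (0 :: t) hchain' 0 rfl
      simpa using this
    -- identify the length using the last element
    have hlastidx : t.length = n := by
      have h1 : (0 :: t).getLast? = some t.length := by
        rw [hrange, List.range'_concat, List.getLast?_concat]
        simp
      rw [List.getLast?_map, h1] at hlast
      simp only [Option.map_some, Option.some.injEq] at hlast
      have htn : t.length ≤ n := by
        apply hmem
        rw [hrange]
        rw [List.mem_range'_1]
        omega
      by_contra hne'
      have : ncfConv a n < ncfConv a t.length := conv_lt a n ha (by omega) le_rfl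
      rw [hlast, hy] at this
      exact absurd this (lt_irrefl _)
    apply hne
    rw [hrange, hlastidx, ← List.range_eq_range']
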